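/- Let p ∈ ℕ, S a p×p real symmetric positive semidefinite matrix, t ≥ 0 and v ∈ ℝ^p. Then ‖(I_p − exp(−t·S))v‖ ≤ 1.2985·‖(I_p − (I_p + t·S)^{-1})v‖. (Comparison of the gradient-flow and ridge-regression stochastic error terms.) -/

import Mathlib

set_option maxHeartbeats 1000000

open Matrix

/-- Squared Euclidean norm on `Fin p → ℝ`. -/
noncomputable def sqnorm {p : ℕ} (v : Fin p → ℝ) : ℝ := ∑ i, (v i) ^ 2

/-- Euclidean norm on `Fin p → ℝ`. -/
noncomputable def enorm' {p : ℕ} (v : Fin p → ℝ) : ℝ := Real.sqrt (sqnorm v)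

lemma exp_lb (y : ℝ) (hy : |y| ≤ 1) :
    1 + y + y^2/2 + y^3/6 + y^4/24 + y^5/120 + y^6/720 + y^7/5040 - y^8 * (9/322560)
      ≤ Real.exp y := by
  have h := Real.exp_bound hy (n := 8) (by norm_num)
  have h2 := (abs_sub_le_iff.1 h).2
  have h3 : |y| ^ 8 = y ^ 8 := by
    rw [← abs_pow, abs_of_nonneg (by positivity)]
  rw [h3] at h2
  norm_num [Finset.sum_range_succ, Nat.factorial] at h2
  nlinarith [h2]


lemma seg0 {x : ℝ} (ha : 0 ≤ x) (hb : x ≤ (1/2)) :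
    (1+x) * (1 - Real.exp (-x)) ≤ 1.2985 * x := by
  have hx1 : (0:ℝ) ≤ 1 + x := by linarith
  have hax : (0:ℝ) ≤ x - 0 := by linarith
  have hbx : (0:ℝ) ≤ (1/2) - x := by linarith
  have hB : 1 + (-x) + (-x)^2/2 + (-x)^3/6 + (-x)^4/24 + (-x)^5/120 + (-x)^6/720 + (-x)^7/5040 - (-x)^8 * (9/322560) ≤ Real.exp (-x) := by
    apply exp_lb
    rw [abs_le]; constructor <;> [linarith; linarith]
  have hprod : (1:ℝ) * (1 + (-x) + (-x)^2/2 + (-x)^3/6 + (-x)^4/24 + (-x)^5/120 + (-x)^6/720 + (-x)^7/5040 - (-x)^8 * (9/322560)) ≤ Real.exp (-x) := by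
    rw [one_mul]; exact hB
  have hmain : (1+x) * ((1:ℝ) * (1 + (-x) + (-x)^2/2 + (-x)^3/6 + (-x)^4/24 + (-x)^5/120 + (-x)^6/720 + (-x)^7/5040 - (-x)^8 * (9/322560))) ≤ (1+x) * Real.exp (-x) :=
    mul_le_mul_of_nonneg_left hprod hx1
  have hk1 : (0:ℝ) ≤ (x - 0)^1 * ((1/2) - x) := mul_nonneg (pow_nonneg hax _) hbx
  have hj1 : (0:ℝ) ≤ (x - 0)^1 := pow_nonneg hax _
  have hk3 : (0:ℝ) ≤ (x - 0)^3 * ((1/2) - x) := mul_nonneg (pow_nonneg hax _) hbx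
  have hj3 : (0:ℝ) ≤ (x - 0)^3 := pow_nonneg hax _
  have hk5 : (0:ℝ) ≤ (x - 0)^5 * ((1/2) - x) := mul_nonneg (pow_nonneg hax _) hbx
  have hj5 : (0:ℝ) ≤ (x - 0)^5 := pow_nonneg hax _
  have hk7 : (0:ℝ) ≤ (x - 0)^7 * ((1/2) - x) := mul_nonneg (pow_nonneg hax _) hbx
  have hj7 : (0:ℝ) ≤ (x - 0)^7 := pow_nonneg hax _
  have hk8 : (0:ℝ) ≤ (x - 0)^8 * ((1/2) - x) := mul_nonneg (pow_nonneg hax _) hbx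
  linarith [hmain, hk1, hj1, hk3, hj3, hk5, hj5, hk7, hj7, hk8]

lemma seg1 {x : ℝ} (ha : (1/2) ≤ x) (hb : x ≤ (7927/10000)) :
    (1+x) * (1 - Real.exp (-x)) ≤ 1.2985 * x := by
  have hx1 : (0:ℝ) ≤ 1 + x := by linarith
  have hax : (0:ℝ) ≤ x - (1/2) := by linarith
  have hbx : (0:ℝ) ≤ (7927/10000) - x := by linarith
  have hB : 1 + (-(x - (7927/10000))) + (-(x - (7927/10000)))^2/2 + (-(x - (7927/10000)))^3/6 + (-(x - (7927/10000)))^4/24 + (-(x - (7927/10000)))^5/120 + (-(x - (7927/10000)))^6/720 + (-(x - (7927/10000)))^7/5040 - (-(x - (7927/10000)))^8 * (9/322560) ≤ Real.exp (-(x - (7927/10000))) := by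
    apply exp_lb
    rw [abs_le]; constructor <;> [linarith; linarith]
  have hq : ((8202263/10000000) : ℝ) ≤ Real.exp (-((7927/10000)/4)) := by
    have h := exp_lb (-((7927/10000)/4)) (by rw [abs_le]; constructor <;> norm_num)
    norm_num at h ⊢
    linarith
  have hr : ((56577633/125000000) : ℝ) ≤ Real.exp (-(7927/10000)) := by
    have h4 : Real.exp (-((7927/10000):ℝ)) = Real.exp (-((7927/10000)/4)) ^ (4:ℕ) := by
      rw [← Real.exp_nat_mul]; norm_num
    rw [h4]
    calc ((56577633/125000000) : ℝ) ≤ ((8202263/10000000) : ℝ)^(4:ℕ) := by norm_num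
      _ ≤ _ := by apply pow_le_pow_left₀ (by norm_num) hq
  have hsplit : Real.exp (-x) = Real.exp (-(7927/10000)) * Real.exp (-(x - (7927/10000))) := by
    rw [← Real.exp_add]; congr 1; ring
  have hprod : ((56577633/125000000):ℝ) * (1 + (-(x - (7927/10000))) + (-(x - (7927/10000)))^2/2 + (-(x - (7927/10000)))^3/6 + (-(x - (7927/10000)))^4/24 + (-(x - (7927/10000)))^5/120 + (-(x - (7927/10000)))^6/720 + (-(x - (7927/10000)))^7/5040 - (-(x - (7927/10000)))^8 * (9/322560)) ≤ Real.exp (-x) := by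
    rw [hsplit]
    calc ((56577633/125000000):ℝ) * (1 + (-(x - (7927/10000))) + (-(x - (7927/10000)))^2/2 + (-(x - (7927/10000)))^3/6 + (-(x - (7927/10000)))^4/24 + (-(x - (7927/10000)))^5/120 + (-(x - (7927/10000)))^6/720 + (-(x - (7927/10000)))^7/5040 - (-(x - (7927/10000)))^8 * (9/322560)) ≤ ((56577633/125000000):ℝ) * Real.exp (-(x - (7927/10000))) :=
          mul_le_mul_of_nonneg_left hB (by norm_num)
      _ ≤ _ := mul_le_mul_of_nonneg_right hr (Real.exp_pos _).le
  have hmain : (1+x) * (((56577633/125000000):ℝ) * (1 + (-(x - (7927/10000))) + (-(x - (7927/10000)))^2/2 + (-(x - (7927/10000)))^3/6 + (-(x - (7927/10000)))^4/24 + (-(x - (7927/10000)))^5/120 + (-(x - (7927/10000)))^6/720 + (-(x - (7927/10000)))^7/5040 - (-(x - (7927/10000)))^8 * (9/322560))) ≤ (1+x) * Real.exp (-x) :=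
    mul_le_mul_of_nonneg_left hprod hx1
  have hk1 : (0:ℝ) ≤ ((7927/10000) - x)^1 * (x - (1/2)) := mul_nonneg (pow_nonneg hbx _) hax
  have hj1 : (0:ℝ) ≤ ((7927/10000) - x)^1 := pow_nonneg hbx _
  have hk2 : (0:ℝ) ≤ ((7927/10000) - x)^2 * (x - (1/2)) := mul_nonneg (pow_nonneg hbx _) hax
  have hk3 : (0:ℝ) ≤ ((7927/10000) - x)^3 * (x - (1/2)) := mul_nonneg (pow_nonneg hbx _) hax
  have hk4 : (0:ℝ) ≤ ((7927/10000) - x)^4 * (x - (1/2)) := mul_nonneg (pow_nonneg hbx _) hax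
  have hk5 : (0:ℝ) ≤ ((7927/10000) - x)^5 * (x - (1/2)) := mul_nonneg (pow_nonneg hbx _) hax
  have hk6 : (0:ℝ) ≤ ((7927/10000) - x)^6 * (x - (1/2)) := mul_nonneg (pow_nonneg hbx _) hax
  have hk7 : (0:ℝ) ≤ ((7927/10000) - x)^7 * (x - (1/2)) := mul_nonneg (pow_nonneg hbx _) hax
  have hj9 : (0:ℝ) ≤ ((7927/10000) - x)^9 := pow_nonneg hbx _
  linarith [hmain, hk1, hj1, hk2, hk3, hk4, hk5, hk6, hk7, hj9]

lemma seg2 {x : ℝ} (ha : (7927/10000) ≤ x) (hb : x ≤ (17927/10000)) :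
    (1+x) * (1 - Real.exp (-x)) ≤ 1.2985 * x := by
  have hx1 : (0:ℝ) ≤ 1 + x := by linarith
  have hax : (0:ℝ) ≤ x - (7927/10000) := by linarith
  have hbx : (0:ℝ) ≤ (17927/10000) - x := by linarith
  have hB : 1 + (-(x - (17927/10000))) + (-(x - (17927/10000)))^2/2 + (-(x - (17927/10000)))^3/6 + (-(x - (17927/10000)))^4/24 + (-(x - (17927/10000)))^5/120 + (-(x - (17927/10000)))^6/720 + (-(x - (17927/10000)))^7/5040 - (-(x - (17927/10000)))^8 * (9/322560) ≤ Real.exp (-(x - (17927/10000))) := by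
    apply exp_lb
    rw [abs_le]; constructor <;> [linarith; linarith]
  have hq : ((798491/1250000) : ℝ) ≤ Real.exp (-((17927/10000)/4)) := by
    have h := exp_lb (-((17927/10000)/4)) (by rw [abs_le]; constructor <;> norm_num)
    norm_num at h ⊢
    linarith
  have hr : ((20813737/125000000) : ℝ) ≤ Real.exp (-(17927/10000)) := by
    have h4 : Real.exp (-((17927/10000):ℝ)) = Real.exp (-((17927/10000)/4)) ^ (4:ℕ) := by
      rw [← Real.exp_nat_mul]; norm_num
    rw [h4]
    calc ((20813737/125000000) : ℝ) ≤ ((798491/1250000) : ℝ)^(4:ℕ) := by norm_num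
      _ ≤ _ := by apply pow_le_pow_left₀ (by norm_num) hq
  have hsplit : Real.exp (-x) = Real.exp (-(17927/10000)) * Real.exp (-(x - (17927/10000))) := by
    rw [← Real.exp_add]; congr 1; ring
  have hprod : ((20813737/125000000):ℝ) * (1 + (-(x - (17927/10000))) + (-(x - (17927/10000)))^2/2 + (-(x - (17927/10000)))^3/6 + (-(x - (17927/10000)))^4/24 + (-(x - (17927/10000)))^5/120 + (-(x - (17927/10000)))^6/720 + (-(x - (17927/10000)))^7/5040 - (-(x - (17927/10000)))^8 * (9/322560)) ≤ Real.exp (-x) := by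
    rw [hsplit]
    calc ((20813737/125000000):ℝ) * (1 + (-(x - (17927/10000))) + (-(x - (17927/10000)))^2/2 + (-(x - (17927/10000)))^3/6 + (-(x - (17927/10000)))^4/24 + (-(x - (17927/10000)))^5/120 + (-(x - (17927/10000)))^6/720 + (-(x - (17927/10000)))^7/5040 - (-(x - (17927/10000)))^8 * (9/322560)) ≤ ((20813737/125000000):ℝ) * Real.exp (-(x - (17927/10000))) :=
          mul_le_mul_of_nonneg_left hB (by norm_num)
      _ ≤ _ := mul_le_mul_of_nonneg_right hr (Real.exp_pos _).le
  have hmain : (1+x) * (((20813737/125000000):ℝ) * (1 + (-(x - (17927/10000))) + (-(x - (17927/10000)))^2/2 + (-(x - (17927/10000)))^3/6 + (-(x - (17927/10000)))^4/24 + (-(x - (17927/10000)))^5/120 + (-(x - (17927/10000)))^6/720 + (-(x - (17927/10000)))^7/5040 - (-(x - (17927/10000)))^8 * (9/322560))) ≤ (1+x) * Real.exp (-x) :=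
    mul_le_mul_of_nonneg_left hprod hx1
  have hj1 : (0:ℝ) ≤ ((17927/10000) - x)^1 := pow_nonneg hbx _
  have hk2 : (0:ℝ) ≤ ((17927/10000) - x)^2 * (x - (7927/10000)) := mul_nonneg (pow_nonneg hbx _) hax
  have hj2 : (0:ℝ) ≤ ((17927/10000) - x)^2 := pow_nonneg hbx _
  have hk3 : (0:ℝ) ≤ ((17927/10000) - x)^3 * (x - (7927/10000)) := mul_nonneg (pow_nonneg hbx _) hax
  have hk4 : (0:ℝ) ≤ ((17927/10000) - x)^4 * (x - (7927/10000)) := mul_nonneg (pow_nonneg hbx _) hax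
  have hk5 : (0:ℝ) ≤ ((17927/10000) - x)^5 * (x - (7927/10000)) := mul_nonneg (pow_nonneg hbx _) hax
  have hk6 : (0:ℝ) ≤ ((17927/10000) - x)^6 * (x - (7927/10000)) := mul_nonneg (pow_nonneg hbx _) hax
  have hk7 : (0:ℝ) ≤ ((17927/10000) - x)^7 * (x - (7927/10000)) := mul_nonneg (pow_nonneg hbx _) hax
  have hj9 : (0:ℝ) ≤ ((17927/10000) - x)^9 := pow_nonneg hbx _
  linarith [hmain, hj1, hk2, hj2, hk3, hk4, hk5, hk6, hk7, hj9]

lemma seg3 {x : ℝ} (ha : (17927/10000) ≤ x) (hb : x ≤ (27927/10000)) :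
    (1+x) * (1 - Real.exp (-x)) ≤ 1.2985 * x := by
  have hx1 : (0:ℝ) ≤ 1 + x := by linarith
  have hax : (0:ℝ) ≤ x - (17927/10000) := by linarith
  have hbx : (0:ℝ) ≤ (27927/10000) - x := by linarith
  have hB : 1 + (-(x - (17927/10000))) + (-(x - (17927/10000)))^2/2 + (-(x - (17927/10000)))^3/6 + (-(x - (17927/10000)))^4/24 + (-(x - (17927/10000)))^5/120 + (-(x - (17927/10000)))^6/720 + (-(x - (17927/10000)))^7/5040 - (-(x - (17927/10000)))^8 * (9/322560) ≤ Real.exp (-(x - (17927/10000))) := by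
    apply exp_lb
    rw [abs_le]; constructor <;> [linarith; linarith]
  have hq : ((798491/1250000) : ℝ) ≤ Real.exp (-((17927/10000)/4)) := by
    have h := exp_lb (-((17927/10000)/4)) (by rw [abs_le]; constructor <;> norm_num)
    norm_num at h ⊢
    linarith
  have hr : ((20813737/125000000) : ℝ) ≤ Real.exp (-(17927/10000)) := by
    have h4 : Real.exp (-((17927/10000):ℝ)) = Real.exp (-((17927/10000)/4)) ^ (4:ℕ) := by
      rw [← Real.exp_nat_mul]; norm_num
    rw [h4]
    calc ((20813737/125000000) : ℝ) ≤ ((798491/1250000) : ℝ)^(4:ℕ) := by norm_num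
      _ ≤ _ := by apply pow_le_pow_left₀ (by norm_num) hq
  have hsplit : Real.exp (-x) = Real.exp (-(17927/10000)) * Real.exp (-(x - (17927/10000))) := by
    rw [← Real.exp_add]; congr 1; ring
  have hprod : ((20813737/125000000):ℝ) * (1 + (-(x - (17927/10000))) + (-(x - (17927/10000)))^2/2 + (-(x - (17927/10000)))^3/6 + (-(x - (17927/10000)))^4/24 + (-(x - (17927/10000)))^5/120 + (-(x - (17927/10000)))^6/720 + (-(x - (17927/10000)))^7/5040 - (-(x - (17927/10000)))^8 * (9/322560)) ≤ Real.exp (-x) := by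
    rw [hsplit]
    calc ((20813737/125000000):ℝ) * (1 + (-(x - (17927/10000))) + (-(x - (17927/10000)))^2/2 + (-(x - (17927/10000)))^3/6 + (-(x - (17927/10000)))^4/24 + (-(x - (17927/10000)))^5/120 + (-(x - (17927/10000)))^6/720 + (-(x - (17927/10000)))^7/5040 - (-(x - (17927/10000)))^8 * (9/322560)) ≤ ((20813737/125000000):ℝ) * Real.exp (-(x - (17927/10000))) :=
          mul_le_mul_of_nonneg_left hB (by norm_num)
      _ ≤ _ := mul_le_mul_of_nonneg_right hr (Real.exp_pos _).le
  have hmain : (1+x) * (((20813737/125000000):ℝ) * (1 + (-(x - (17927/10000))) + (-(x - (17927/10000)))^2/2 + (-(x - (17927/10000)))^3/6 + (-(x - (17927/10000)))^4/24 + (-(x - (17927/10000)))^5/120 + (-(x - (17927/10000)))^6/720 + (-(x - (17927/10000)))^7/5040 - (-(x - (17927/10000)))^8 * (9/322560))) ≤ (1+x) * Real.exp (-x) :=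
    mul_le_mul_of_nonneg_left hprod hx1
  have hk0 : (0:ℝ) ≤ (x - (17927/10000))^0 * ((27927/10000) - x) := mul_nonneg (pow_nonneg hax _) hbx
  have hk2 : (0:ℝ) ≤ (x - (17927/10000))^2 * ((27927/10000) - x) := mul_nonneg (pow_nonneg hax _) hbx
  have hj2 : (0:ℝ) ≤ (x - (17927/10000))^2 := pow_nonneg hax _
  have hk3 : (0:ℝ) ≤ (x - (17927/10000))^3 * ((27927/10000) - x) := mul_nonneg (pow_nonneg hax _) hbx
  have hk5 : (0:ℝ) ≤ (x - (17927/10000))^5 * ((27927/10000) - x) := mul_nonneg (pow_nonneg hax _) hbx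
  have hj5 : (0:ℝ) ≤ (x - (17927/10000))^5 := pow_nonneg hax _
  have hk7 : (0:ℝ) ≤ (x - (17927/10000))^7 * ((27927/10000) - x) := mul_nonneg (pow_nonneg hax _) hbx
  have hj7 : (0:ℝ) ≤ (x - (17927/10000))^7 := pow_nonneg hax _
  have hk8 : (0:ℝ) ≤ (x - (17927/10000))^8 * ((27927/10000) - x) := mul_nonneg (pow_nonneg hax _) hbx
  linarith [hmain, hk0, hk2, hj2, hk3, hk5, hj5, hk7, hj7, hk8]

lemma seg4 {x : ℝ} (ha : (27927/10000) ≤ x) (hb : x ≤ (84/25)) :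
    (1+x) * (1 - Real.exp (-x)) ≤ 1.2985 * x := by
  have hx1 : (0:ℝ) ≤ 1 + x := by linarith
  have hax : (0:ℝ) ≤ x - (27927/10000) := by linarith
  have hbx : (0:ℝ) ≤ (84/25) - x := by linarith
  have hB : 1 + (-(x - (27927/10000))) + (-(x - (27927/10000)))^2/2 + (-(x - (27927/10000)))^3/6 + (-(x - (27927/10000)))^4/24 + (-(x - (27927/10000)))^5/120 + (-(x - (27927/10000)))^6/720 + (-(x - (27927/10000)))^7/5040 - (-(x - (27927/10000)))^8 * (9/322560) ≤ Real.exp (-(x - (27927/10000))) := by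
    apply exp_lb
    rw [abs_le]; constructor <;> [linarith; linarith]
  have hq : ((994979/2000000) : ℝ) ≤ Real.exp (-((27927/10000)/4)) := by
    have h := exp_lb (-((27927/10000)/4)) (by rw [abs_le]; constructor <;> norm_num)
    norm_num at h ⊢
    linarith
  have hr : ((15313543/250000000) : ℝ) ≤ Real.exp (-(27927/10000)) := by
    have h4 : Real.exp (-((27927/10000):ℝ)) = Real.exp (-((27927/10000)/4)) ^ (4:ℕ) := by
      rw [← Real.exp_nat_mul]; norm_num
    rw [h4]
    calc ((15313543/250000000) : ℝ) ≤ ((994979/2000000) : ℝ)^(4:ℕ) := by norm_num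
      _ ≤ _ := by apply pow_le_pow_left₀ (by norm_num) hq
  have hsplit : Real.exp (-x) = Real.exp (-(27927/10000)) * Real.exp (-(x - (27927/10000))) := by
    rw [← Real.exp_add]; congr 1; ring
  have hprod : ((15313543/250000000):ℝ) * (1 + (-(x - (27927/10000))) + (-(x - (27927/10000)))^2/2 + (-(x - (27927/10000)))^3/6 + (-(x - (27927/10000)))^4/24 + (-(x - (27927/10000)))^5/120 + (-(x - (27927/10000)))^6/720 + (-(x - (27927/10000)))^7/5040 - (-(x - (27927/10000)))^8 * (9/322560)) ≤ Real.exp (-x) := by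
    rw [hsplit]
    calc ((15313543/250000000):ℝ) * (1 + (-(x - (27927/10000))) + (-(x - (27927/10000)))^2/2 + (-(x - (27927/10000)))^3/6 + (-(x - (27927/10000)))^4/24 + (-(x - (27927/10000)))^5/120 + (-(x - (27927/10000)))^6/720 + (-(x - (27927/10000)))^7/5040 - (-(x - (27927/10000)))^8 * (9/322560)) ≤ ((15313543/250000000):ℝ) * Real.exp (-(x - (27927/10000))) :=
          mul_le_mul_of_nonneg_left hB (by norm_num)
      _ ≤ _ := mul_le_mul_of_nonneg_right hr (Real.exp_pos _).le
  have hmain : (1+x) * (((15313543/250000000):ℝ) * (1 + (-(x - (27927/10000))) + (-(x - (27927/10000)))^2/2 + (-(x - (27927/10000)))^3/6 + (-(x - (27927/10000)))^4/24 + (-(x - (27927/10000)))^5/120 + (-(x - (27927/10000)))^6/720 + (-(x - (27927/10000)))^7/5040 - (-(x - (27927/10000)))^8 * (9/322560))) ≤ (1+x) * Real.exp (-x) :=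
    mul_le_mul_of_nonneg_left hprod hx1
  have hj1 : (0:ℝ) ≤ (x - (27927/10000))^1 := pow_nonneg hax _
  have hk2 : (0:ℝ) ≤ (x - (27927/10000))^2 * ((84/25) - x) := mul_nonneg (pow_nonneg hax _) hbx
  have hj2 : (0:ℝ) ≤ (x - (27927/10000))^2 := pow_nonneg hax _
  have hk3 : (0:ℝ) ≤ (x - (27927/10000))^3 * ((84/25) - x) := mul_nonneg (pow_nonneg hax _) hbx
  have hk5 : (0:ℝ) ≤ (x - (27927/10000))^5 * ((84/25) - x) := mul_nonneg (pow_nonneg hax _) hbx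
  have hj5 : (0:ℝ) ≤ (x - (27927/10000))^5 := pow_nonneg hax _
  have hk7 : (0:ℝ) ≤ (x - (27927/10000))^7 * ((84/25) - x) := mul_nonneg (pow_nonneg hax _) hbx
  have hj7 : (0:ℝ) ≤ (x - (27927/10000))^7 := pow_nonneg hax _
  have hk8 : (0:ℝ) ≤ (x - (27927/10000))^8 * ((84/25) - x) := mul_nonneg (pow_nonneg hax _) hbx
  linarith [hmain, hj1, hk2, hj2, hk3, hk5, hj5, hk7, hj7, hk8]
lemma segTail {x : ℝ} (ha : ((84/25):ℝ) ≤ x) :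
    (1+x) * (1 - Real.exp (-x)) ≤ 1.2985 * x := by
  have h1 := Real.exp_pos (-x)
  nlinarith [mul_pos (show (0:ℝ) < 1 + x by linarith) h1]

lemma key_scalar {x : ℝ} (hx : 0 ≤ x) :
    (1+x) * (1 - Real.exp (-x)) ≤ 1.2985 * x := by
  rcases le_total x ((1/2)) with h|h
  · exact seg0 hx h
  rcases le_total x ((7927/10000)) with h2|h2
  · exact seg1 h h2
  replace h := h2
  rcases le_total x ((17927/10000)) with h2|h2
  · exact seg2 h h2
  replace h := h2
  rcases le_total x ((27927/10000)) with h2|h2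
  · exact seg3 h h2
  replace h := h2
  rcases le_total x ((84/25)) with h2|h2
  · exact seg4 h h2
  · exact segTail h2


lemma key_scalar' {x : ℝ} (hx : 0 ≤ x) :
    1 - Real.exp (-x) ≤ 1.2985 * (1 - (1+x)⁻¹) := by
  have hx1 : (0:ℝ) < 1 + x := by linarith
  have e : 1 - (1+x)⁻¹ = x / (1+x) := by field_simp; ring
  rw [e, mul_div_assoc']
  rw [le_div_iff₀ hx1]
  nlinarith [key_scalar hx]

lemma sqnorm_eq_dot {p : ℕ} (v : Fin p → ℝ) : sqnorm v = v ⬝ᵥ v := by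
  simp [sqnorm, dotProduct, sq]

lemma sqnorm_mulVec_orth {p : ℕ} {U : Matrix (Fin p) (Fin p) ℝ}
    (hU : Uᵀ * U = 1) (z : Fin p → ℝ) : sqnorm (U *ᵥ z) = sqnorm z := by
  rw [sqnorm_eq_dot, sqnorm_eq_dot]
  calc (U *ᵥ z) ⬝ᵥ (U *ᵥ z) = ((U *ᵥ z) ᵥ* U) ⬝ᵥ z := by rw [dotProduct_mulVec]
    _ = (Uᵀ *ᵥ (U *ᵥ z)) ⬝ᵥ z := by rw [mulVec_transpose]
    _ = ((Uᵀ * U) *ᵥ z) ⬝ᵥ z := by rw [mulVec_mulVec]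
    _ = z ⬝ᵥ z := by rw [hU, one_mulVec]

/-- comparison of the gradient-flow and ridge-regression stochastic error
terms: `‖(I − exp(−tS))v‖ ≤ 1.2985·‖(I − (I + tS)⁻¹)v‖` for `S` symmetric positive semidefinite
and `t ≥ 0`. -/
theorem gf_ridge_stochastic_comparison
    (p : ℕ) (S : Matrix (Fin p) (Fin p) ℝ) (hS : S.PosSemidef)
    (t : ℝ) (ht : 0 ≤ t) (v : Fin p → ℝ) :
    enorm' ((1 - NormedSpace.exp (-(t • S))) *ᵥ v) ≤
      1.2985 * enorm' ((1 - (1 + t • S)⁻¹) *ᵥ v) := by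
  classical
  have hH : S.IsHermitian := hS.1
  set U : Matrix (Fin p) (Fin p) ℝ := (hH.eigenvectorUnitary : Matrix (Fin p) (Fin p) ℝ) with hUdef
  have hU1 : star U * U = 1 := Unitary.coe_star_mul_self hH.eigenvectorUnitary
  have hU2 : U * star U = 1 := Unitary.coe_mul_star_self hH.eigenvectorUnitary
  set lam : Fin p → ℝ := hH.eigenvalues with hlamdef
  have hlam : ∀ i, 0 ≤ lam i := fun i => hS.eigenvalues_nonneg i
  have hspec : S = U * diagonal lam * star U := by
    have h := hH.spectral_theorem
    simpa using h
  have hUunit : IsUnit U := ⟨⟨U, star U, hU2, hU1⟩, rfl⟩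
  have hUinv : U⁻¹ = star U := inv_eq_left_inv hU1
  -- exponential part
  have hexp : NormedSpace.exp (-(t • S))
      = U * diagonal (fun i => Real.exp (-(t * lam i))) * star U := by
    have h1 : -(t • S) = U * diagonal (fun i => -(t * lam i)) * star U := by
      have hsl : t • lam = fun i => t * lam i := funext fun i => rfl
      have hd : diagonal (fun i => -(t * lam i)) = -(t • diagonal lam) := by
        rw [← diagonal_smul, ← diagonal_neg, hsl]
      rw [hspec, hd]
      simp [Matrix.mul_smul, Matrix.smul_mul, Matrix.neg_mul, Matrix.mul_neg]
    rw [h1, ← hUinv, Matrix.exp_conj U _ hUunit, Matrix.exp_diagonal, hUinv]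
    congr 2
    rw [Pi.exp_def]
    funext i
    rw [← Real.exp_eq_exp_ℝ]
  -- inverse part
  have hone : (1 : Matrix (Fin p) (Fin p) ℝ) = U * diagonal (fun _ => (1:ℝ)) * star U := by
    rw [diagonal_one, Matrix.mul_one, hU2]
  have h1ts : 1 + t • S = U * diagonal (fun i => 1 + t * lam i) * star U := by
    have hd : diagonal (fun i => 1 + t * lam i)
        = diagonal (fun _ => (1:ℝ)) + t • diagonal lam := by
      have hsl : t • lam = fun i => t * lam i := funext fun i => rfl
      rw [← diagonal_smul, ← diagonal_add, hsl]
    conv_lhs => rw [hone, hspec]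
    rw [hd]
    simp [Matrix.add_mul, Matrix.mul_add, Matrix.mul_smul, Matrix.smul_mul]
  have hpos : ∀ i, (0:ℝ) < 1 + t * lam i := by
    intro i
    have := mul_nonneg ht (hlam i)
    linarith
  have hinv : (1 + t • S)⁻¹ = U * diagonal (fun i => (1 + t * lam i)⁻¹) * star U := by
    apply inv_eq_right_inv
    rw [h1ts]
    calc (U * diagonal (fun i => 1 + t * lam i) * star U)
          * (U * diagonal (fun i => (1 + t * lam i)⁻¹) * star U)
        = U * (diagonal (fun i => 1 + t * lam i) * (star U * U)
            * diagonal (fun i => (1 + t * lam i)⁻¹)) * star U := by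
          simp only [Matrix.mul_assoc]
      _ = U * (diagonal (fun i => 1 + t * lam i)
            * diagonal (fun i => (1 + t * lam i)⁻¹)) * star U := by
          rw [hU1, Matrix.mul_one]
      _ = 1 := by
          rw [diagonal_mul_diagonal]
          have : (fun i => (1 + t * lam i) * (1 + t * lam i)⁻¹) = fun _ => (1:ℝ) := by
            funext i
            exact mul_inv_cancel₀ (hpos i).ne'
          rw [this, diagonal_one, Matrix.mul_one, hU2]
  -- the two difference matrices
  set f : Fin p → ℝ := fun i => 1 - Real.exp (-(t * lam i)) with hfdef
  set g : Fin p → ℝ := fun i => 1 - (1 + t * lam i)⁻¹ with hgdef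
  have hAeq : (1 : Matrix (Fin p) (Fin p) ℝ) - NormedSpace.exp (-(t • S))
      = U * diagonal f * star U := by
    rw [hexp]
    conv_lhs => rw [hone]
    rw [← Matrix.sub_mul, ← Matrix.mul_sub, ← diagonal_sub]
  have hBeq : (1 : Matrix (Fin p) (Fin p) ℝ) - (1 + t • S)⁻¹
      = U * diagonal g * star U := by
    rw [hinv]
    conv_lhs => rw [hone]
    rw [← Matrix.sub_mul, ← Matrix.mul_sub, ← diagonal_sub]
  -- transpose facts
  have hUT : Uᵀ * U = 1 := by rwa [Matrix.star_eq_conjTranspose, conjTranspose_eq_transpose_of_trivial] at hU1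
  have hUTT : (star U)ᵀ * star U = 1 := by
    rw [Matrix.star_eq_conjTranspose, conjTranspose_eq_transpose_of_trivial] at hU1 hU2 ⊢
    rw [transpose_transpose]
    exact hU2
  set w : Fin p → ℝ := star U *ᵥ v with hwdef
  have hmv : ∀ (d : Fin p → ℝ), (U * diagonal d * star U) *ᵥ v = U *ᵥ (diagonal d *ᵥ w) := by
    intro d
    rw [← mulVec_mulVec, ← mulVec_mulVec]
  have hsq : ∀ (d : Fin p → ℝ), sqnorm ((U * diagonal d * star U) *ᵥ v) = ∑ i, (d i * w i)^2 := by
    intro d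
    rw [hmv d, sqnorm_mulVec_orth hUT]
    unfold sqnorm
    congr 1
    funext i
    rw [mulVec_diagonal]
  -- scalar comparisons
  have hcomp : ∀ i, (f i * w i)^2 ≤ 1.2985^2 * (g i * w i)^2 := by
    intro i
    have hx : 0 ≤ t * lam i := mul_nonneg ht (hlam i)
    have hf0 : 0 ≤ f i := by
      have : Real.exp (-(t * lam i)) ≤ 1 := Real.exp_le_one_iff.mpr (by linarith)
      simp only [hfdef]
      linarith
    have hfg : f i ≤ 1.2985 * g i := key_scalar' hx
    have h2 : (f i)^2 ≤ (1.2985 * g i)^2 := by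
      apply pow_le_pow_left₀ hf0 hfg
    calc (f i * w i)^2 = (f i)^2 * (w i)^2 := by ring
      _ ≤ (1.2985 * g i)^2 * (w i)^2 := mul_le_mul_of_nonneg_right h2 (sq_nonneg _)
      _ = 1.2985^2 * (g i * w i)^2 := by ring
  have hsum : sqnorm ((1 - NormedSpace.exp (-(t • S))) *ᵥ v)
      ≤ 1.2985^2 * sqnorm ((1 - (1 + t • S)⁻¹) *ᵥ v) := by
    rw [hAeq, hBeq, hsq f, hsq g, Finset.mul_sum]
    exact Finset.sum_le_sum (fun i _ => hcomp i)
  -- conclude with square roots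
  unfold enorm'
  have h0 : 0 ≤ sqnorm ((1 - (1 + t • S)⁻¹) *ᵥ v) := by
    unfold sqnorm
    positivity
  calc Real.sqrt (sqnorm ((1 - NormedSpace.exp (-(t • S))) *ᵥ v))
      ≤ Real.sqrt (1.2985^2 * sqnorm ((1 - (1 + t • S)⁻¹) *ᵥ v)) := Real.sqrt_le_sqrt hsum
    _ = 1.2985 * Real.sqrt (sqnorm ((1 - (1 + t • S)⁻¹) *ᵥ v)) := by
        rw [Real.sqrt_mul (by positivity), Real.sqrt_sq (by norm_num)]
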